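/- Let (P_n) and (Q_n) be monic orthogonal polynomial sequences with respect to u and v, related by P_n + Σ_{i=1}^N r_{i,n} P_{n-i} = Q_n + Σ_{i=1}^M s_{i,n} Q_{n-i}, with a relation Φ_M u = Ψ_N v between the functionals (Φ_M, Ψ_N of exact degrees M, N). Then for every n ≥ N+M, the identity (s_{M,N+M}/⟨u,P_M²⟩) · r_{N,n} · ⟨u, P_{n-N}²⟩ = (r_{N,N+M}/⟨v,Q_N²⟩) · s_{M,n} · ⟨v, Q_{n-M}²⟩ holds, where Ψ_N = r_{N,M+N} Q̄_N + Σ_{i=0}^{N-1} λ_i Q̄_i and Φ_M = s_{M,M+N} P̄_M + Σ_{i=0}^{M-1} μ_i P̄_i with Q̄_i = Q_i/⟨v,Q_i²⟩, P̄_i = P_i/⟨u,P_i²⟩. -/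

import Mathlib

open Polynomial

lemma orth_low (u : Polynomial ℂ →ₗ[ℂ] ℂ) (P : ℕ → Polynomial ℂ)
    (hm : ∀ n, (P n).Monic) (hd : ∀ n, (P n).degree = n)
    (horth : ∀ m n, m ≠ n → u (P m * P n) = 0) :
    ∀ (d : ℕ) (q : Polynomial ℂ), q.natDegree ≤ d → ∀ k : ℕ,
      q.degree < (k : ℕ) → u (P k * q) = 0 := by
  have hP0 : P 0 = 1 := by
    have h1 : (P 0).natDegree = 0 := natDegree_eq_of_degree_eq_some (hd 0)
    exact (hm 0).natDegree_eq_zero.mp h1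
  intro d
  induction d with
  | zero =>
    intro q hq k hk
    have hq0 : q = C (q.coeff 0) := eq_C_of_natDegree_le_zero hq
    by_cases hcz : q.coeff 0 = 0
    · rw [hq0, hcz]; simp
    · have hk0 : k ≠ 0 := by
        rintro rfl
        rw [hq0] at hk
        simp [degree_C hcz] at hk
      have h0 : u (P k * P 0) = 0 := horth k 0 hk0
      rw [hP0, mul_one] at h0
      rw [hq0, mul_comm, ← smul_eq_C_mul, map_smul, smul_eq_mul, h0, mul_zero]
  | succ d ih =>
    intro q hq k hk
    by_cases h0 : q.natDegree ≤ d
    · exact ih q h0 k hk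
    have hdeg : q.natDegree = d + 1 := by omega
    have hqne : q ≠ 0 := fun h => by simp [h] at hdeg
    have hqdeg : q.degree = ((d + 1 : ℕ) : WithBot ℕ) := by
      rw [degree_eq_natDegree hqne, hdeg]
    have hcne : q.leadingCoeff ≠ 0 := leadingCoeff_ne_zero.mpr hqne
    have hdlt : (d + 1 : ℕ) < k := by
      rw [hqdeg] at hk; exact_mod_cast hk
    have hdm : (C q.leadingCoeff * P (d + 1)).degree = q.degree := by
      rw [degree_C_mul hcne, hd, hqdeg]
    have hlc : q.leadingCoeff = (C q.leadingCoeff * P (d + 1)).leadingCoeff := by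
      rw [leadingCoeff_mul, leadingCoeff_C, (hm (d + 1)).leadingCoeff, mul_one]
    have hsub : (q - C q.leadingCoeff * P (d + 1)).degree < q.degree :=
      degree_sub_lt hdm.symm hqne hlc
    have hsubnat : (q - C q.leadingCoeff * P (d + 1)).natDegree ≤ d := by
      by_cases hz : q - C q.leadingCoeff * P (d + 1) = 0
      · simp [hz]
      · have := (natDegree_lt_iff_degree_lt hz).mpr (by rw [← hqdeg]; exact hsub)
        omega
    have hkey : u (P k * q) = u (P k * (C q.leadingCoeff * P (d + 1)))
        + u (P k * (q - C q.leadingCoeff * P (d + 1))) := by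
      rw [← map_add]; congr 1; ring
    have h1 : u (P k * (C q.leadingCoeff * P (d + 1))) = 0 := by
      have : P k * (C q.leadingCoeff * P (d + 1)) = C q.leadingCoeff * (P k * P (d + 1)) := by ring
      rw [this, ← smul_eq_C_mul, map_smul, smul_eq_mul, horth k (d + 1) (by omega), mul_zero]
    have h2 : u (P k * (q - C q.leadingCoeff * P (d + 1))) = 0 := by
      apply ih _ hsubnat k
      calc (q - C q.leadingCoeff * P (d + 1)).degree < q.degree := hsub
        _ < (k : ℕ) := hk
    rw [hkey, h1, h2, add_zero]

lemma orth_monic (u : Polynomial ℂ →ₗ[ℂ] ℂ) (P : ℕ → Polynomial ℂ)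
    (hm : ∀ n, (P n).Monic) (hd : ∀ n, (P n).degree = n)
    (horth : ∀ m n, m ≠ n → u (P m * P n) = 0)
    (k : ℕ) (q : Polynomial ℂ) (hq : q.Monic) (hqd : q.degree = (k : ℕ)) :
    u (P k * q) = u (P k ^ 2) := by
  have hsub : (q - P k).degree < (k : ℕ) := by
    have := degree_sub_lt (p := q) (q := P k) (by rw [hqd, hd k]) hq.ne_zero
      (by rw [hq.leadingCoeff, (hm k).leadingCoeff])
    rwa [hqd] at this
  have h2 : u (P k * (q - P k)) = 0 :=
    orth_low u P hm hd horth _ _ le_rfl k hsub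
  have h3 : u (P k * q) - u (P k ^ 2) = u (P k * (q - P k)) := by
    rw [← map_sub]; congr 1; ring
  rw [h2] at h3
  exact sub_eq_zero.mp h3

/-- The key identity relating `r_{N,n}` and `s_{M,n}` obtained by applying the
functional relation `Φ_M u = Ψ_N v` to `R_n · Q_{n-(N+M)}`. -/
theorem key_identity
    (N M : ℕ) (hN : 1 ≤ N) (hM : 1 ≤ M)
    (u v : Polynomial ℂ →ₗ[ℂ] ℂ)
    (P Q : ℕ → Polynomial ℂ) (r s : ℕ → ℕ → ℂ)
    (hPmonic : ∀ n, (P n).Monic) (hPdeg : ∀ n, (P n).degree = n)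
    (hQmonic : ∀ n, (Q n).Monic) (hQdeg : ∀ n, (Q n).degree = n)
    (hPorth : ∀ m n, m ≠ n → u (P m * P n) = 0) (hPreg : ∀ n, u (P n ^ 2) ≠ 0)
    (hQorth : ∀ m n, m ≠ n → v (Q m * Q n) = 0) (hQreg : ∀ n, v (Q n ^ 2) ≠ 0)
    (hrz : ∀ i n, n < i → r i n = 0) (hsz : ∀ i n, n < i → s i n = 0)
    (hrel : ∀ n, P n + ∑ i ∈ Finset.Icc 1 N, r i n • P (n - i)
        = Q n + ∑ i ∈ Finset.Icc 1 M, s i n • Q (n - i))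
    (lam mu : ℕ → ℂ) (Φ Ψ : Polynomial ℂ)
    (hΨdef : Ψ = r N (M + N) • ((v (Q N ^ 2))⁻¹ • Q N)
        + ∑ i ∈ Finset.range N, lam i • ((v (Q i ^ 2))⁻¹ • Q i))
    (hΦdef : Φ = s M (M + N) • ((u (P M ^ 2))⁻¹ • P M)
        + ∑ i ∈ Finset.range M, mu i • ((u (P i ^ 2))⁻¹ • P i))
    (hfun : ∀ p, u (Φ * p) = v (Ψ * p)) :
    ∀ n, N + M ≤ n →
      s M (N + M) / u (P M ^ 2) * r N n * u (P (n - N) ^ 2)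
        = r N (N + M) / v (Q N ^ 2) * s M n * v (Q (n - M) ^ 2) := by
  intro n hn
  set c : ℕ := n - (N + M) with hc
  have hCu : ∀ (a : ℂ) (q : Polynomial ℂ), u (C a * q) = a * u q := fun a q => by
    rw [← smul_eq_C_mul, map_smul, smul_eq_mul]
  have hCv : ∀ (a : ℂ) (q : Polynomial ℂ), v (C a * q) = a * v q := fun a q => by
    rw [← smul_eq_C_mul, map_smul, smul_eq_mul]
  have hlowP : ∀ (q : Polynomial ℂ) (k : ℕ), q.degree < (k : ℕ) → u (P k * q) = 0 :=
    fun q k h => orth_low u P hPmonic hPdeg hPorth q.natDegree q le_rfl k h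
  have hlowQ : ∀ (q : Polynomial ℂ) (k : ℕ), q.degree < (k : ℕ) → v (Q k * q) = 0 :=
    fun q k h => orth_low v Q hQmonic hQdeg hQorth q.natDegree q le_rfl k h
  set p : Polynomial ℂ := (P n + ∑ i ∈ Finset.Icc 1 N, r i n • P (n - i)) * Q c with hp
  have hpQ : p = (Q n + ∑ i ∈ Finset.Icc 1 M, s i n • Q (n - i)) * Q c := by
    rw [hp, hrel n]
  -- degree facts
  have hPQdeg : ∀ i : ℕ, (P i * Q c).degree = ((i + c : ℕ) : WithBot ℕ) := fun i => by
    rw [degree_mul, hPdeg, hQdeg, Nat.cast_add]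
  have hQQdeg : ∀ i : ℕ, (Q i * Q c).degree = ((i + c : ℕ) : WithBot ℕ) := fun i => by
    rw [degree_mul, hQdeg, hQdeg, Nat.cast_add]
  have hterm_u : ∀ i j : ℕ, i + c < j → u (P j * (P i * Q c)) = 0 := fun i j h =>
    hlowP _ j (by rw [hPQdeg]; exact_mod_cast h)
  have hterm_v : ∀ i j : ℕ, i + c < j → v (Q j * (Q i * Q c)) = 0 := fun i j h =>
    hlowQ _ j (by rw [hQQdeg]; exact_mod_cast h)
  -- splitting u (w * p) along the P-expansion of R_n
  have hsplit_u : ∀ w : Polynomial ℂ, u (w * p)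
      = u (P n * (w * Q c)) + ∑ j ∈ Finset.Icc 1 N, r j n * u (P (n - j) * (w * Q c)) := by
    intro w
    have hw : w * p = P n * (w * Q c)
        + ∑ j ∈ Finset.Icc 1 N, C (r j n) * (P (n - j) * (w * Q c)) := by
      rw [hp]
      simp only [smul_eq_C_mul]
      rw [add_mul, mul_add, Finset.sum_mul, Finset.mul_sum]
      refine congrArg₂ (· + ·) ?_ ?_
      · ring
      · exact Finset.sum_congr rfl fun j _ => by ring
    rw [hw, map_add, map_sum]
    simp only [hCu]
  have hsplit_v : ∀ w : Polynomial ℂ, v (w * p)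
      = v (Q n * (w * Q c)) + ∑ j ∈ Finset.Icc 1 M, s j n * v (Q (n - j) * (w * Q c)) := by
    intro w
    have hw : w * p = Q n * (w * Q c)
        + ∑ j ∈ Finset.Icc 1 M, C (s j n) * (Q (n - j) * (w * Q c)) := by
      rw [hpQ]
      simp only [smul_eq_C_mul]
      rw [add_mul, mul_add, Finset.sum_mul, Finset.mul_sum]
      refine congrArg₂ (· + ·) ?_ ?_
      · ring
      · exact Finset.sum_congr rfl fun j _ => by ring
    rw [hw, map_add, map_sum]
    simp only [hCv]
  -- evaluation of the u-side terms
  have hPM : u (P M * p) = r N n * u (P (n - N) ^ 2) := by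
    rw [hsplit_u]
    rw [hterm_u M n (by omega), zero_add]
    rw [Finset.sum_eq_single N]
    · rw [orth_monic u P hPmonic hPdeg hPorth (n - N) (P M * Q c)
        ((hPmonic M).mul (hQmonic c))
        (by rw [hPQdeg, show M + c = n - N from by omega])]
    · intro j hj hjne
      simp only [Finset.mem_Icc] at hj
      rw [hterm_u M (n - j) (by omega), mul_zero]
    · intro hnotin
      exact absurd (Finset.mem_Icc.mpr ⟨hN, le_refl N⟩) hnotin
  have hPi0 : ∀ i < M, u (P i * p) = 0 := by
    intro i hi
    rw [hsplit_u]
    rw [hterm_u i n (by omega), zero_add]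
    refine Finset.sum_eq_zero fun j hj => ?_
    simp only [Finset.mem_Icc] at hj
    rw [hterm_u i (n - j) (by omega), mul_zero]
  -- evaluation of the v-side terms
  have hQN : v (Q N * p) = s M n * v (Q (n - M) ^ 2) := by
    rw [hsplit_v]
    rw [hterm_v N n (by omega), zero_add]
    rw [Finset.sum_eq_single M]
    · rw [orth_monic v Q hQmonic hQdeg hQorth (n - M) (Q N * Q c)
        ((hQmonic N).mul (hQmonic c))
        (by rw [hQQdeg, show N + c = n - M from by omega])]
    · intro j hj hjne
      simp only [Finset.mem_Icc] at hj
      rw [hterm_v N (n - j) (by omega), mul_zero]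
    · intro hnotin
      exact absurd (Finset.mem_Icc.mpr ⟨hM, le_refl M⟩) hnotin
  have hQi0 : ∀ i < N, v (Q i * p) = 0 := by
    intro i hi
    rw [hsplit_v]
    rw [hterm_v i n (by omega), zero_add]
    refine Finset.sum_eq_zero fun j hj => ?_
    simp only [Finset.mem_Icc] at hj
    rw [hterm_v i (n - j) (by omega), mul_zero]
  -- the two sides of the functional identity
  have hΦp : u (Φ * p) = s M (M + N) * (u (P M ^ 2))⁻¹ * (r N n * u (P (n - N) ^ 2)) := by
    have hΦ' : Φ * p = C (s M (M + N) * (u (P M ^ 2))⁻¹) * (P M * p)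
        + ∑ i ∈ Finset.range M, C (mu i * (u (P i ^ 2))⁻¹) * (P i * p) := by
      rw [hΦdef]
      simp only [smul_eq_C_mul]
      rw [add_mul, Finset.sum_mul]
      congr 1
      · rw [C_mul]; ring
      · exact Finset.sum_congr rfl fun i _ => by rw [C_mul]; ring
    rw [hΦ', map_add, map_sum, hCu, hPM]
    have hz : ∑ i ∈ Finset.range M, u (C (mu i * (u (P i ^ 2))⁻¹) * (P i * p)) = 0 := by
      refine Finset.sum_eq_zero fun i hi => ?_
      rw [hCu, hPi0 i (Finset.mem_range.mp hi), mul_zero]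
    rw [hz, add_zero]
  have hΨp : v (Ψ * p) = r N (M + N) * (v (Q N ^ 2))⁻¹ * (s M n * v (Q (n - M) ^ 2)) := by
    have hΨ' : Ψ * p = C (r N (M + N) * (v (Q N ^ 2))⁻¹) * (Q N * p)
        + ∑ i ∈ Finset.range N, C (lam i * (v (Q i ^ 2))⁻¹) * (Q i * p) := by
      rw [hΨdef]
      simp only [smul_eq_C_mul]
      rw [add_mul, Finset.sum_mul]
      refine congrArg₂ (· + ·) ?_ ?_
      · rw [C_mul]; ring
      · exact Finset.sum_congr rfl fun i _ => by rw [C_mul]; ring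
    rw [hΨ', map_add, map_sum, hCv, hQN]
    have hz : ∑ i ∈ Finset.range N, v (C (lam i * (v (Q i ^ 2))⁻¹) * (Q i * p)) = 0 := by
      refine Finset.sum_eq_zero fun i hi => ?_
      rw [hCv, hQi0 i (Finset.mem_range.mp hi), mul_zero]
    rw [hz, add_zero]
  have heq := hfun p
  rw [hΦp, hΨp] at heq
  rw [show N + M = M + N from Nat.add_comm N M, div_eq_mul_inv, div_eq_mul_inv]
  linear_combination heq
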